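/- For any two blocks w and v there exists a block u such that u represents the same element of G_BV as the concatenation w v; that is, the set of elements of G_BV represented by blocks is closed under multiplication. -/

import Mathlib

/-- Relator corresponding to the equation `u = v`. -/
def grel {α : Type*} (u v : FreeGroup α) : FreeGroup α := u * v⁻¹

/-- Generators of the braided Thompson group `BV`.  `s i` denotes `σ_{i+1}` and
`t i` denotes `τ_{i+1}` (so that exactly the generators `σ_i, τ_i` with `i ≥ 1` occur). -/
inductive BVGen : Type
  | x : ℕ → BVGen
  | s : ℕ → BVGen
  | t : ℕ → BVGen

namespace BVGen

/-- The free-group letter `x_i`. -/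
def X (i : ℕ) : FreeGroup BVGen := FreeGroup.of (BVGen.x i)

/-- The free-group letter `σ_i` (meaningful for `i ≥ 1`). -/
def S (i : ℕ) : FreeGroup BVGen := FreeGroup.of (BVGen.s (i - 1))

/-- The free-group letter `τ_i` (meaningful for `i ≥ 1`). -/
def T (i : ℕ) : FreeGroup BVGen := FreeGroup.of (BVGen.t (i - 1))

/-- The defining relations of the braided Thompson group `BV`. -/
def bvRels : Set (FreeGroup BVGen) :=
  { g |
    (∃ i j, i < j ∧ g = grel (X j * X i) (X i * X (j + 1))) ∨
    (∃ i j, 1 ≤ i ∧ i + 2 ≤ j ∧ g = grel (S i * S j) (S j * S i)) ∨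
    (∃ i, 1 ≤ i ∧ g = grel (S i * S (i + 1) * S i) (S (i + 1) * S i * S (i + 1))) ∨
    (∃ i j, 1 ≤ i ∧ i + 2 ≤ j ∧ g = grel (S i * T j) (T j * S i)) ∨
    (∃ i, 1 ≤ i ∧ g = grel (S i * T (i + 1) * S i) (T (i + 1) * S i * T (i + 1))) ∨
    (∃ i j, 1 ≤ i ∧ i < j ∧ g = grel (S i * X j) (X j * S i)) ∨
    (∃ i, 1 ≤ i ∧ g = grel (S i * X i) (X (i - 1) * S (i + 1) * S i)) ∨
    (∃ i j, j + 2 ≤ i ∧ g = grel (S i * X j) (X j * S (i + 1))) ∨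
    (∃ i, g = grel (S (i + 1) * X i) (X (i + 1) * S (i + 1) * S (i + 2))) ∨
    (∃ i j, j + 2 ≤ i ∧ g = grel (T i * X j) (X j * T (i + 1))) ∨
    (∃ i, 1 ≤ i ∧ g = grel (T i * X (i - 1)) (S i * T (i + 1))) ∨
    (∃ i, 1 ≤ i ∧ g = grel (T i) (X (i - 1) * T (i + 1) * S i)) }

end BVGen

/-- The braided Thompson group `BV`, given by its infinite presentation. -/
abbrev GBV : Type := PresentedGroup BVGen.bvRels

namespace GBV

/-- The generator `x_i` of `BV`. -/
def xg (i : ℕ) : GBV := PresentedGroup.of (BVGen.x i)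

/-- The generator `σ_i` of `BV` (meaningful for `i ≥ 1`). -/
def sg (i : ℕ) : GBV := PresentedGroup.of (BVGen.s (i - 1))

/-- The generator `τ_i` of `BV` (meaningful for `i ≥ 1`). -/
def tg (i : ℕ) : GBV := PresentedGroup.of (BVGen.t (i - 1))

/-- H_n: the subgroup of `BV` generated by the B_n generators
`σ_1, …, σ_{n-2}, τ_{n-1}`. -/
def Hn (n : ℕ) : Subgroup GBV :=
  Subgroup.closure ({g | ∃ i, 1 ≤ i ∧ i + 2 ≤ n ∧ g = sg i} ∪ {tg (n - 1)})

end GBV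

namespace GBV

/-- `N(u)` for a positive x-word given by its list of indices:
`N(empty) = 0`, `N(u x_j) = max (N u + 1) (j + 2)`. -/
def Nval (l : List ℕ) : ℕ := l.foldl (fun acc j => max (acc + 1) (j + 2)) 0

/-- The B_n generators, as letters: `σ_1, …, σ_{n-2}, τ_{n-1}`. -/
def BnGen (n : ℕ) : Set BVGen :=
  {g | (∃ i, 1 ≤ i ∧ i + 2 ≤ n ∧ g = BVGen.s (i - 1)) ∨ (2 ≤ n ∧ g = BVGen.t (n - 2))}

/-- A block `w₁ w₂ w₃⁻¹`: `w₁` and `w₃` are positive x-words with nondecreasing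
indices (i.e. of the form `x_{i₁}^{r₁} ⋯ x_{i_k}^{r_k}` with `i₁ < ⋯ < i_k`, `r_m ≥ 1`),
recorded as lists of indices, and `w₂` is a word in the B_n generators and their
inverses (letters with a sign) for some `n ≥ max (N w₁) (N w₃) + 1`. -/
structure Block where
  w1 : List ℕ
  w2 : List (BVGen × Bool)
  w3 : List ℕ
  n : ℕ
  h1 : w1.Chain' (· ≤ ·)
  h3 : w3.Chain' (· ≤ ·)
  h2 : ∀ p ∈ w2, p.1 ∈ BnGen n
  hbound : max (Nval w1) (Nval w3) + 1 ≤ n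

/-- Evaluation of a positive x-word in `BV`. -/
def evalX (l : List ℕ) : GBV := (l.map xg).prod

/-- Evaluation of a signed word in the generators in `BV`. -/
def evalW (l : List (BVGen × Bool)) : GBV :=
  (l.map (fun p => if p.2 then PresentedGroup.of p.1 else (PresentedGroup.of p.1)⁻¹)).prod

/-- The element of `BV` represented by a block. -/
def Block.eval (b : Block) : GBV := evalX b.w1 * evalW b.w2 * (evalX b.w3)⁻¹

end GBV

set_option maxHeartbeats 1000000

namespace GBV
open BVGen

section Helpers
variable {G : Type*} [Group G]
lemma conj_inv' {a x b : G} (h : a * x = x * b) : a⁻¹ * x = x * b⁻¹ := by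
  rw [inv_mul_eq_iff_eq_mul, ← mul_assoc, h, mul_assoc, mul_inv_cancel, mul_one]
end Helpers

lemma relquot {u v : FreeGroup BVGen} (h : grel u v ∈ BVGen.bvRels) :
    (QuotientGroup.mk u : GBV) = QuotientGroup.mk v := by
  have h1 : (QuotientGroup.mk (grel u v) : GBV) = 1 :=
    (QuotientGroup.eq_one_iff _).2 (Subgroup.subset_normalClosure h)
  have h2 : (QuotientGroup.mk (u * v⁻¹) : GBV)
      = (QuotientGroup.mk u : GBV) * (QuotientGroup.mk v : GBV)⁻¹ := rfl
  rw [grel, h2] at h1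
  exact mul_inv_eq_one.mp h1

lemma relA {i j : ℕ} (h : i < j) : xg j * xg i = xg i * xg (j + 1) :=
  relquot (Or.inl ⟨i, j, h, rfl⟩)

lemma relC1 {k j : ℕ} (h : k + 1 < j) : sg (k+1) * xg j = xg j * sg (k+1) :=
  relquot (Or.inr <| Or.inr <| Or.inr <| Or.inr <| Or.inr <| Or.inl
    ⟨k+1, j, Nat.le_add_left 1 k, h, rfl⟩)

lemma relC2 (k : ℕ) : sg (k+1) * xg (k+1) = xg k * sg (k+2) * sg (k+1) :=
  relquot (Or.inr <| Or.inr <| Or.inr <| Or.inr <| Or.inr <| Or.inr <| Or.inl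
    ⟨k+1, Nat.le_add_left 1 k, rfl⟩)

lemma relC3 {k j : ℕ} (h : j + 2 ≤ k + 1) : sg (k+1) * xg j = xg j * sg (k+2) :=
  relquot (Or.inr <| Or.inr <| Or.inr <| Or.inr <| Or.inr <| Or.inr <| Or.inr <| Or.inl
    ⟨k+1, j, h, rfl⟩)

lemma relC4 (k : ℕ) : sg (k+1) * xg k = xg (k+1) * sg (k+1) * sg (k+2) :=
  relquot (Or.inr <| Or.inr <| Or.inr <| Or.inr <| Or.inr <| Or.inr <| Or.inr <| Or.inr <|
    Or.inl ⟨k, rfl⟩)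

lemma relD1 {k j : ℕ} (h : j + 2 ≤ k + 1) : tg (k+1) * xg j = xg j * tg (k+2) :=
  relquot (Or.inr <| Or.inr <| Or.inr <| Or.inr <| Or.inr <| Or.inr <| Or.inr <| Or.inr <|
    Or.inr <| Or.inl ⟨k+1, j, h, rfl⟩)

lemma relD2 (k : ℕ) : tg (k+1) * xg k = sg (k+1) * tg (k+2) :=
  relquot (Or.inr <| Or.inr <| Or.inr <| Or.inr <| Or.inr <| Or.inr <| Or.inr <| Or.inr <|
    Or.inr <| Or.inr <| Or.inl ⟨k+1, Nat.le_add_left 1 k, rfl⟩)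

lemma relD3 (k : ℕ) : tg (k+1) = xg k * tg (k+2) * sg (k+1) :=
  relquot (Or.inr <| Or.inr <| Or.inr <| Or.inr <| Or.inr <| Or.inr <| Or.inr <| Or.inr <|
    Or.inr <| Or.inr <| Or.inr ⟨k+1, Nat.le_add_left 1 k, rfl⟩)

lemma invC1 {k j : ℕ} (h : k + 1 < j) : (sg (k+1))⁻¹ * xg j = xg j * (sg (k+1))⁻¹ :=
  conj_inv' (relC1 h)

lemma invC3 {k j : ℕ} (h : j + 2 ≤ k + 1) : (sg (k+1))⁻¹ * xg j = xg j * (sg (k+2))⁻¹ :=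
  conj_inv' (relC3 h)

lemma invD1 {k j : ℕ} (h : j + 2 ≤ k + 1) : (tg (k+1))⁻¹ * xg j = xg j * (tg (k+2))⁻¹ :=
  conj_inv' (relD1 h)

lemma invC2' (k : ℕ) :
    (sg (k+1))⁻¹ * xg (k+1) = xg k * (sg (k+2))⁻¹ * (sg (k+1))⁻¹ := by
  rw [inv_mul_eq_iff_eq_mul, ← mul_assoc, ← mul_assoc, relC4]
  group

lemma invC4' (k : ℕ) :
    (sg (k+1))⁻¹ * xg k = xg (k+1) * (sg (k+1))⁻¹ * (sg (k+2))⁻¹ := by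
  rw [inv_mul_eq_iff_eq_mul, ← mul_assoc, ← mul_assoc, relC2]
  group

lemma invD2' (k : ℕ) : (tg (k+1))⁻¹ * xg k = (sg (k+1))⁻¹ * (tg (k+2))⁻¹ := by
  rw [relD3 k]
  group

lemma subT (k : ℕ) : tg (k+1) = xg k * (tg (k+2) * sg (k+1)) := by
  rw [relD3 k]; group

lemma subTinv (k : ℕ) : (tg (k+1))⁻¹ = xg k * ((tg (k+2))⁻¹ * (sg (k+1))⁻¹) := by
  have h := relD2 k
  have h2 : tg (k+1) = sg (k+1) * tg (k+2) * (xg k)⁻¹ := by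
    rw [← h]; group
  rw [h2]; group

end GBV

namespace GBV
open BVGen

abbrev Ltr := BVGen × Bool

/-- evaluation of a single signed letter -/
def evalL (p : Ltr) : GBV := if p.2 then PresentedGroup.of p.1 else (PresentedGroup.of p.1)⁻¹

@[simp] lemma evalW_nil : evalW [] = 1 := rfl
@[simp] lemma evalW_cons (p : Ltr) (l : List Ltr) : evalW (p :: l) = evalL p * evalW l := by
  simp [evalW, evalL]
@[simp] lemma evalW_append (a b : List Ltr) : evalW (a ++ b) = evalW a * evalW b := by
  simp [evalW]
@[simp] lemma evalX_nil : evalX [] = 1 := rfl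
@[simp] lemma evalX_cons (j : ℕ) (l : List ℕ) : evalX (j :: l) = xg j * evalX l := by
  simp [evalX]
@[simp] lemma evalX_append (a b : List ℕ) : evalX (a ++ b) = evalX a * evalX b := by
  simp [evalX]

@[simp] lemma evalL_s_true (k : ℕ) : evalL (BVGen.s k, true) = sg (k+1) := rfl
@[simp] lemma evalL_s_false (k : ℕ) : evalL (BVGen.s k, false) = (sg (k+1))⁻¹ := rfl
@[simp] lemma evalL_t_true (k : ℕ) : evalL (BVGen.t k, true) = tg (k+1) := rfl
@[simp] lemma evalL_t_false (k : ℕ) : evalL (BVGen.t k, false) = (tg (k+1))⁻¹ := rfl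

/-- inverse of a word -/
def invW (l : List Ltr) : List Ltr := (l.map (fun p => (p.1, !p.2))).reverse

@[simp] lemma evalL_flip (p : Ltr) : evalL (p.1, !p.2) = (evalL p)⁻¹ := by
  rcases p with ⟨g, b⟩; cases b <;> simp [evalL]

lemma evalW_invW (l : List Ltr) : evalW (invW l) = (evalW l)⁻¹ := by
  induction l with
  | nil => simp [invW]
  | cons p l ih => simp [invW] at ih ⊢; simp [ih]

lemma invW_letters {l : List Ltr} {p : Ltr} (h : p ∈ invW l) : ∃ b, (p.1, b) ∈ l := by
  rw [invW, List.mem_reverse, List.mem_map] at h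
  obtain ⟨q, hq, rfl⟩ := h
  exact ⟨q.2, by simpa using hq⟩

/-- membership lemmas for BnGen -/
lemma s_mem_BnGen {m n : ℕ} (h : m + 3 ≤ n) : BVGen.s m ∈ BnGen n :=
  Or.inl ⟨m + 1, Nat.le_add_left 1 m, by omega, by simp⟩

lemma t_mem_BnGen {m n : ℕ} (h : m + 2 = n) : BVGen.t m ∈ BnGen n :=
  Or.inr ⟨by omega, by congr 1; omega⟩

lemma mem_BnGen_elim {g : BVGen} {n : ℕ} (h : g ∈ BnGen n) :
    (∃ m, m + 3 ≤ n ∧ g = BVGen.s m) ∨ (2 ≤ n ∧ g = BVGen.t (n-2)) := by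
  rcases h with ⟨i, hi1, hi2, hg⟩ | ⟨hn, hg⟩
  · exact Or.inl ⟨i - 1, by omega, hg⟩
  · exact Or.inr ⟨hn, hg⟩

/-- words in B_n letters -/
def InB (n : ℕ) (l : List Ltr) : Prop := ∀ p ∈ l, p.1 ∈ BnGen n

lemma InB_nil (n : ℕ) : InB n [] := fun p hp => absurd hp List.not_mem_nil
lemma InB_append {n : ℕ} {a b : List Ltr} (ha : InB n a) (hb : InB n b) : InB n (a ++ b) := by
  intro p hp; rcases List.mem_append.mp hp with h | h; exacts [ha p h, hb p h]

/-- pushing x_j leftward through a single σ-letter -/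
lemma push_s (k j : ℕ) (b : Bool) :
    ∃ (j' : ℕ) (out : List Ltr),
      evalL (BVGen.s k, b) * xg j = xg j' * evalW out ∧
      j' ≤ max j (k + 1) ∧
      ∀ p ∈ out, ∃ m, m ≤ k + 1 ∧ p.1 = BVGen.s m := by
  have outb : ∀ m, m ≤ k + 1 → ∀ (bb : Bool), ∀ p ∈ [((BVGen.s m : BVGen), bb)],
      ∃ m', m' ≤ k + 1 ∧ p.1 = BVGen.s m' := by
    intro m hm bb p hp; simp at hp; subst hp; exact ⟨m, hm, rfl⟩
  rcases Nat.lt_trichotomy (k+1) j with hlt | heq | hgt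
  · -- k+1 < j : commute
    cases b
    · exact ⟨j, [(BVGen.s k, false)], by simpa using invC1 hlt, le_max_left _ _, outb k (by omega) false⟩
    · exact ⟨j, [(BVGen.s k, true)], by simpa using relC1 hlt, le_max_left _ _, outb k (by omega) true⟩
  · -- j = k+1
    cases b
    · refine ⟨k, [(BVGen.s (k+1), false), (BVGen.s k, false)], ?_, by omega, ?_⟩
      · subst heq; simpa [mul_assoc] using invC2' k
      · intro p hp
        rcases List.mem_cons.mp hp with hp | hp
        · exact ⟨k+1, le_rfl, by rw [hp]⟩
        · rcases List.mem_singleton.mp hp with hp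
          exact ⟨k, by omega, by rw [hp]⟩
    · refine ⟨k, [(BVGen.s (k+1), true), (BVGen.s k, true)], ?_, by omega, ?_⟩
      · subst heq; simpa [mul_assoc] using relC2 k
      · intro p hp
        rcases List.mem_cons.mp hp with hp | hp
        · exact ⟨k+1, le_rfl, by rw [hp]⟩
        · rcases List.mem_singleton.mp hp with hp
          exact ⟨k, by omega, by rw [hp]⟩
  · -- j < k+1, i.e. j ≤ k
    rcases Nat.lt_or_ge j k with hjk | hjk
    · -- j ≤ k-1 : C3 case
      cases b
      · exact ⟨j, [(BVGen.s (k+1), false)], by simpa using invC3 (by omega), le_max_left _ _,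
          outb (k+1) le_rfl false⟩
      · exact ⟨j, [(BVGen.s (k+1), true)], by simpa using relC3 (by omega), le_max_left _ _,
          outb (k+1) le_rfl true⟩
    · -- j = k
      have hj : j = k := by omega
      subst hj
      cases b
      · refine ⟨j+1, [(BVGen.s j, false), (BVGen.s (j+1), false)], ?_, by omega, ?_⟩
        · simpa [mul_assoc] using invC4' j
        · intro p hp
          rcases List.mem_cons.mp hp with hp | hp
          · exact ⟨j, by omega, by rw [hp]⟩
          · rcases List.mem_singleton.mp hp with hp
            exact ⟨j+1, le_rfl, by rw [hp]⟩
      · refine ⟨j+1, [(BVGen.s j, true), (BVGen.s (j+1), true)], ?_, by omega, ?_⟩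
        · simpa [mul_assoc] using relC4 j
        · intro p hp
          rcases List.mem_cons.mp hp with hp | hp
          · exact ⟨j, by omega, by rw [hp]⟩
          · rcases List.mem_singleton.mp hp with hp
            exact ⟨j+1, le_rfl, by rw [hp]⟩

/-- crossing a τ-letter: j + 1 ≤ k -/
lemma push_t_cross {k j : ℕ} (h : j < k) (b : Bool) :
    evalL (BVGen.t k, b) * xg j = xg j * evalL (BVGen.t (k+1), b) := by
  cases b
  · simpa using invD1 (k := k) (j := j) (by omega)
  · simpa using relD1 (k := k) (j := j) (by omega)

/-- death at a τ-letter -/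
lemma push_t_death (k : ℕ) (b : Bool) :
    evalL (BVGen.t k, b) * xg k = evalW [(BVGen.s k, b), (BVGen.t (k+1), b)] := by
  cases b
  · simpa [mul_assoc] using invD2' k
  · simpa [mul_assoc] using relD2 k

/-- substitution: τ at level k+2 equals x_k times B_{k+3}-letters -/
lemma sub_t (k : ℕ) (b : Bool) :
    evalL (BVGen.t k, b) = xg k * evalW [(BVGen.t (k+1), b), (BVGen.s k, b)] := by
  cases b
  · simpa [mul_assoc] using subTinv k
  · simpa [mul_assoc] using subT k

end GBV

namespace GBV
open BVGen

def isTauL (p : Ltr) : Bool := match p.1 with | BVGen.t _ => true | _ => false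
def tauCt (l : List Ltr) : ℕ := l.countP isTauL

@[simp] lemma isTauL_t (m : ℕ) (bb : Bool) : isTauL (BVGen.t m, bb) = true := rfl
@[simp] lemma isTauL_s (m : ℕ) (bb : Bool) : isTauL (BVGen.s m, bb) = false := rfl

lemma tauCt_append (a b : List Ltr) : tauCt (a ++ b) = tauCt a + tauCt b :=
  List.countP_append

lemma tau_mem_pos {l : List Ltr} {p : Ltr} (hp : p ∈ l) (ht : isTauL p = true) :
    0 < tauCt l := List.countP_pos_iff.mpr ⟨p, hp, ht⟩

lemma InB_succ_of_tauFree {n : ℕ} {b : List Ltr} (hB : InB n b) (h0 : tauCt b = 0) :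
    InB (n+1) b := by
  intro p hp
  rcases mem_BnGen_elim (hB p hp) with ⟨m, hm, hp1⟩ | ⟨hn2, hp1⟩
  · rw [hp1]; exact s_mem_BnGen (by omega)
  · exfalso
    have : 0 < tauCt b := tau_mem_pos hp (by rcases p with ⟨p1, p2⟩; simp at hp1; rw [hp1]; rfl)
    omega

lemma split_last_tau {l : List Ltr} (h : 0 < tauCt l) :
    ∃ (a : List Ltr) (m : ℕ) (bb : Bool) (b : List Ltr), l = a ++ ((BVGen.t m, bb) :: b) ∧ tauCt b = 0 ∧
      tauCt a + 1 = tauCt l := by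
  induction l using List.reverseRecOn with
  | nil => simp [tauCt] at h
  | append_singleton a g ih =>
    by_cases hg : isTauL g = true
    · obtain ⟨m, bb, rfl⟩ : ∃ m bb, g = (BVGen.t m, bb) := by
        rcases g with ⟨g1, g2⟩
        cases g1 <;> simp [isTauL] at hg ⊢
      exact ⟨a, m, bb, [], rfl, rfl, by simp [tauCt_append, tauCt]⟩
    · have hg0 : tauCt [g] = 0 := by
        simp [tauCt, List.countP_singleton, hg]
      have h' : 0 < tauCt a := by
        rw [tauCt_append] at h; omega
      obtain ⟨a', m, bb, b, hsp, hb0, hct⟩ := ih h'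
      refine ⟨a', m, bb, b ++ [g], by rw [hsp]; simp, ?_, ?_⟩
      · rw [tauCt_append]; omega
      · rw [tauCt_append]; omega

end GBV

namespace GBV
open BVGen

/-- Main pushing/raising lemma, by strong induction on the number of τ-letters. -/
lemma push_main : ∀ (K n : ℕ) (l : List Ltr), 2 ≤ n → InB n l → tauCt l ≤ K →
    (∀ j, j + 2 ≤ n →
      ∃ P l', evalW l * xg j = evalX P * evalW l' ∧ InB (n+1) l' ∧ P.length ≤ 1 ∧
        (∀ p ∈ P, p + 2 ≤ n)) ∧
    (∃ P l', evalW l = evalX P * evalW l' ∧ InB (n+1) l' ∧ P.length ≤ 1 ∧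
      (∀ p ∈ P, p + 2 ≤ n)) := by
  intro K
  induction K using Nat.strong_induction_on with
  | _ K IH =>
  intro n l hn hB hK
  have PP : ∀ l₀, InB n l₀ → tauCt l₀ ≤ K → ∀ j, j + 2 ≤ n →
      ∃ P l', evalW l₀ * xg j = evalX P * evalW l' ∧ InB (n+1) l' ∧ P.length ≤ 1 ∧
        (∀ p ∈ P, p + 2 ≤ n) := by
    intro l₀
    induction l₀ using List.reverseRecOn with
    | nil =>
      intro _ _ j hj
      exact ⟨[j], [], by simp, InB_nil _, by simp, by intro p hp; simp at hp; omega⟩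
    | append_singleton a g iha =>
      intro hBl hKl j hj
      have hBa : InB n a := fun p hp => hBl p (by simp [hp])
      have hga : g.1 ∈ BnGen n := hBl g (by simp)
      have hKa : tauCt a ≤ K := by
        have h1 := tauCt_append a [g]; omega
      rcases mem_BnGen_elim hga with ⟨m, hm, hgs⟩ | ⟨hn2, hgt⟩
      · -- σ letter
        have hgpair : g = (BVGen.s m, g.2) := by
          rcases g with ⟨g1, g2⟩; simp at hgs ⊢; exact hgs
        obtain ⟨j₂, out, heq, hj₂, hout⟩ := push_s m j g.2
        have hj₂n : j₂ + 2 ≤ n := by omega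
        obtain ⟨P, a', heqa, hBa', hlen, hPb⟩ := iha hBa hKa j₂ hj₂n
        refine ⟨P, a' ++ out, ?_, ?_, hlen, hPb⟩
        · calc evalW (a ++ [g]) * xg j = evalW a * (evalL (BVGen.s m, g.2) * xg j) := by
                rw [← hgpair]; simp [mul_assoc]
          _ = (evalW a * xg j₂) * evalW out := by rw [heq, ← mul_assoc]
          _ = evalX P * evalW a' * evalW out := by rw [heqa]
          _ = evalX P * evalW (a' ++ out) := by simp [mul_assoc]
        · exact InB_append hBa' (fun p hp => by
            obtain ⟨m', hm', hp1⟩ := hout p hp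
            rw [hp1]; exact s_mem_BnGen (by omega))
      · -- τ letter
        have hgpair : g = (BVGen.t (n-2), g.2) := by
          rcases g with ⟨g1, g2⟩; simp at hgt ⊢; exact hgt
        have hKa' : tauCt a + 1 ≤ K := by
          have h1 := tauCt_append a [g]
          have h2 : tauCt [g] = 1 := by rw [hgpair]; rfl
          omega
        by_cases hcross : j < n - 2
        · obtain ⟨P, a', heqa, hBa', hlen, hPb⟩ :=
            (IH (tauCt a) (by omega) n a hn hBa le_rfl).1 j hj
          refine ⟨P, a' ++ [(BVGen.t (n-2+1), g.2)], ?_, ?_, hlen, hPb⟩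
          · calc evalW (a ++ [g]) * xg j
                = evalW a * (evalL (BVGen.t (n-2), g.2) * xg j) := by
                  rw [← hgpair]; simp [mul_assoc]
            _ = (evalW a * xg j) * evalL (BVGen.t (n-2+1), g.2) := by
                  rw [push_t_cross hcross g.2, ← mul_assoc]
            _ = evalX P * evalW a' * evalL (BVGen.t (n-2+1), g.2) := by rw [heqa]
            _ = evalX P * evalW (a' ++ [(BVGen.t (n-2+1), g.2)]) := by simp [mul_assoc]
          · refine InB_append hBa' ?_
            intro p hp
            rcases List.mem_singleton.mp hp with hp
            rw [hp]; exact t_mem_BnGen (by omega)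
        · have hjk : j = n - 2 := by omega
          obtain ⟨P, a', heqa, hBa', hlen, hPb⟩ :=
            (IH (tauCt a) (by omega) n a hn hBa le_rfl).2
          refine ⟨P, a' ++ [(BVGen.s (n-2), g.2), (BVGen.t (n-2+1), g.2)], ?_, ?_, hlen, hPb⟩
          · calc evalW (a ++ [g]) * xg j
                = evalW a * (evalL (BVGen.t (n-2), g.2) * xg (n-2)) := by
                  rw [← hgpair, hjk]; simp [mul_assoc]
            _ = evalW a * evalW [(BVGen.s (n-2), g.2), (BVGen.t (n-2+1), g.2)] := by
                  rw [push_t_death (n-2) g.2]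
            _ = evalX P * evalW a' * evalW [(BVGen.s (n-2), g.2), (BVGen.t (n-2+1), g.2)] := by
                  rw [heqa]
            _ = evalX P * evalW (a' ++ [(BVGen.s (n-2), g.2), (BVGen.t (n-2+1), g.2)]) := by
                  simp [mul_assoc]
          · refine InB_append hBa' ?_
            intro p hp
            rcases List.mem_cons.mp hp with hp | hp
            · rw [hp]; exact s_mem_BnGen (by omega)
            · rcases List.mem_singleton.mp hp with hp
              rw [hp]; exact t_mem_BnGen (by omega)
  refine ⟨PP l hB hK, ?_⟩
  by_cases h0 : tauCt l = 0
  · exact ⟨[], l, by simp, InB_succ_of_tauFree hB h0, by simp, by simp⟩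
  · obtain ⟨a, m, bb, b, hsplit, hb0, hct⟩ := split_last_tau (Nat.pos_of_ne_zero h0)
    have hBa : InB n a := fun p hp => hB p (by rw [hsplit]; simp [hp])
    have hBb : InB n b := fun p hp => hB p (by rw [hsplit]; simp [hp])
    have hmem : (BVGen.t m : BVGen) ∈ BnGen n := hB (BVGen.t m, bb) (by rw [hsplit]; simp)
    have hm : m + 2 = n := by
      rcases mem_BnGen_elim hmem with ⟨m', _, h'⟩ | ⟨hn2, h'⟩
      · simp at h'
      · have : m = n - 2 := by injection h'
        omega
    obtain ⟨P, a', heqa, hBa', hlen, hPb⟩ := PP a hBa (by omega) m (by omega)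
    refine ⟨P, a' ++ ((BVGen.t (m+1), bb) :: (BVGen.s m, bb) :: b), ?_, ?_, hlen, hPb⟩
    · calc evalW l = evalW a * (evalL (BVGen.t m, bb) * evalW b) := by
            rw [hsplit]; simp [mul_assoc]
      _ = evalW a * (xg m * (evalW [(BVGen.t (m+1), bb), (BVGen.s m, bb)] * evalW b)) := by
            rw [sub_t m bb]; simp [mul_assoc]
      _ = (evalW a * xg m) * evalW ((BVGen.t (m+1), bb) :: (BVGen.s m, bb) :: b) := by
            simp [mul_assoc]
      _ = evalX P * evalW a' * evalW ((BVGen.t (m+1), bb) :: (BVGen.s m, bb) :: b) := by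
            rw [heqa]
      _ = evalX P * evalW (a' ++ ((BVGen.t (m+1), bb) :: (BVGen.s m, bb) :: b)) := by
            simp [mul_assoc]
    · refine InB_append hBa' ?_
      intro p hp
      rcases List.mem_cons.mp hp with hp | hp
      · rw [hp]; exact t_mem_BnGen (by omega)
      · rcases List.mem_cons.mp hp with hp | hp
        · rw [hp]; exact s_mem_BnGen (by omega)
        · exact InB_succ_of_tauFree hBb hb0 p hp

end GBV

namespace GBV
open BVGen

/-- Nval with explicit accumulator. -/
def NA (a : ℕ) (l : List ℕ) : ℕ := l.foldl (fun acc j => max (acc + 1) (j + 2)) a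

@[simp] lemma NA_nil (a : ℕ) : NA a [] = a := rfl
@[simp] lemma NA_cons (a j : ℕ) (l : List ℕ) : NA a (j :: l) = NA (max (a+1) (j+2)) l := rfl
lemma NA_append (a : ℕ) (l₁ l₂ : List ℕ) : NA a (l₁ ++ l₂) = NA (NA a l₁) l₂ :=
  List.foldl_append ..
lemma Nval_eq_NA (l : List ℕ) : Nval l = NA 0 l := rfl

lemma NA_mono {a b : ℕ} (h : a ≤ b) (l : List ℕ) : NA a l ≤ NA b l := by
  induction l generalizing a b with
  | nil => simpa
  | cons j t ih => simp only [NA_cons]; exact ih (by omega)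

lemma NA_short {P : List ℕ} {n a : ℕ} (hlen : P.length ≤ 1) (hb : ∀ p ∈ P, p + 2 ≤ n)
    (ha : a + 1 ≤ n) : NA a P ≤ n := by
  match P with
  | [] => simpa using by omega
  | [p] =>
    have := hb p (by simp)
    simp [NA]; omega
  | p :: q :: r => simp at hlen

/-- raising the level from n to N -/
lemma raise_iter : ∀ (d n : ℕ) (l : List Ltr), 2 ≤ n → InB n l →
    ∃ P l', evalW l = evalX P * evalW l' ∧ InB (n + d) l' ∧
      (∀ a, a + 1 ≤ n → NA a P + 1 ≤ n + d) := by
  intro d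
  induction d with
  | zero =>
    intro n l hn hB
    exact ⟨[], l, by simp, by simpa using hB, fun a ha => by simpa using ha⟩
  | succ d ihd =>
    intro n l hn hB
    obtain ⟨P₁, l₁, he₁, hB₁, hlen₁, hb₁⟩ := (push_main (tauCt l) n l hn hB le_rfl).2
    obtain ⟨P₂, l', he₂, hB₂, hbound₂⟩ := ihd (n+1) l₁ (by omega) hB₁
    refine ⟨P₁ ++ P₂, l', ?_, by rw [show n + (d+1) = n + 1 + d by omega]; exact hB₂, ?_⟩
    · rw [he₁, he₂, evalX_append, mul_assoc]
    · intro a ha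
      rw [NA_append]
      have h1 : NA a P₁ ≤ n := NA_short hlen₁ hb₁ ha
      have h2 := hbound₂ (NA a P₁) (by omega)
      omega

/-- pushing a list of x-letters through -/
lemma push_multi : ∀ (xs : List ℕ) (n : ℕ) (l : List Ltr), 2 ≤ n → InB n l →
    (∀ x ∈ xs, x + 2 ≤ n) →
    ∃ P l', evalW l * evalX xs = evalX P * evalW l' ∧ InB (n + xs.length) l' ∧
      (∀ a, a + 1 ≤ n → NA a P + 1 ≤ n + xs.length) := by
  intro xs
  induction xs with
  | nil =>
    intro n l hn hB _
    exact ⟨[], l, by simp, by simpa using hB, fun a ha => by simpa using ha⟩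
  | cons x xs ih =>
    intro n l hn hB hxs
    obtain ⟨P₁, l₁, he₁, hB₁, hlen₁, hb₁⟩ :=
      (push_main (tauCt l) n l hn hB le_rfl).1 x (hxs x (by simp))
    obtain ⟨P₂, l', he₂, hB₂, hbound₂⟩ := ih (n+1) l₁ (by omega) hB₁
      (fun y hy => by have := hxs y (by simp [hy]); omega)
    refine ⟨P₁ ++ P₂, l', ?_, ?_, ?_⟩
    · calc evalW l * evalX (x :: xs) = (evalW l * xg x) * evalX xs := by
            simp [mul_assoc]
      _ = evalX P₁ * (evalW l₁ * evalX xs) := by rw [he₁, mul_assoc]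
      _ = evalX P₁ * (evalX P₂ * evalW l') := by rw [he₂]
      _ = evalX (P₁ ++ P₂) * evalW l' := by simp [mul_assoc]
    · rw [show n + (x :: xs).length = n + 1 + xs.length by simp; omega]; exact hB₂
    · intro a ha
      rw [NA_append]
      have h1 : NA a P₁ ≤ n := NA_short hlen₁ hb₁ ha
      have h2 := hbound₂ (NA a P₁) (by omega)
      simp only [List.length_cons]
      omega

end GBV

namespace GBV
open BVGen

section Helpers2
variable {G : Type*} [Group G]
lemma conj_inv2 {a x b : G} (h : a * x = x * b) : x⁻¹ * a = b * x⁻¹ := by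
  have h2 : a = x * b * x⁻¹ := by rw [← h]; group
  rw [h2]; group
end Helpers2

def maxI (l : List ℕ) : ℕ := l.foldr max 0

lemma le_maxI {l : List ℕ} {p : ℕ} (hp : p ∈ l) : p ≤ maxI l := by
  induction l with
  | nil => cases hp
  | cons i t ih =>
    rcases List.mem_cons.mp hp with h | h
    · subst h; simp [maxI]
    · have := ih h; simp [maxI]; right; simpa [maxI] using this

lemma maxI_le {l : List ℕ} {B : ℕ} (h : ∀ p ∈ l, p ≤ B) : maxI l ≤ B := by
  induction l with
  | nil => simp [maxI]
  | cons i t ih =>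
    simp [maxI]
    exact ⟨h i (by simp), by simpa [maxI] using ih (fun p hp => h p (by simp [hp]))⟩

lemma neg_one : ∀ (L : List ℕ) (j : ℕ),
    ∃ L', (∀ y ∈ L', y ≤ maxI L + 1) ∧ L'.length ≤ L.length ∧
      ((∃ j', (xg j)⁻¹ * evalX L = evalX L' * (xg j')⁻¹ ∧ j' ≤ j + L.length) ∨
       ((xg j)⁻¹ * evalX L = evalX L')) := by
  intro L
  induction L with
  | nil =>
    intro j
    exact ⟨[], by simp, by simp, Or.inl ⟨j, by simp, by omega⟩⟩
  | cons i t ih =>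
    intro j
    rcases Nat.lt_trichotomy i j with hlt | heq | hgt
    · obtain ⟨L', hb, hlen, hc⟩ := ih (j+1)
      have hxi : (xg j)⁻¹ * xg i = xg i * (xg (j+1))⁻¹ := conj_inv' (relA hlt)
      have hmax : maxI t ≤ maxI (i :: t) := by simp [maxI]
      refine ⟨i :: L', ?_, by simp; omega, ?_⟩
      · intro y hy
        rcases List.mem_cons.mp hy with h | h
        · subst h; have : y ≤ maxI (y :: t) := by simp [maxI]
          omega
        · have := hb y h; omega
      · rcases hc with ⟨j', he, hj'⟩ | he
        · refine Or.inl ⟨j', ?_, by simp; omega⟩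
          calc (xg j)⁻¹ * evalX (i :: t) = ((xg j)⁻¹ * xg i) * evalX t := by
                simp [mul_assoc]
          _ = xg i * ((xg (j+1))⁻¹ * evalX t) := by rw [hxi, mul_assoc]
          _ = xg i * (evalX L' * (xg j')⁻¹) := by rw [he]
          _ = evalX (i :: L') * (xg j')⁻¹ := by simp [mul_assoc]
        · refine Or.inr ?_
          calc (xg j)⁻¹ * evalX (i :: t) = ((xg j)⁻¹ * xg i) * evalX t := by
                simp [mul_assoc]
          _ = xg i * ((xg (j+1))⁻¹ * evalX t) := by rw [hxi, mul_assoc]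
          _ = xg i * evalX L' := by rw [he]
          _ = evalX (i :: L') := by simp
    · subst heq
      refine ⟨t, ?_, by simp, Or.inr ?_⟩
      · intro y hy
        have : y ≤ maxI (i :: t) := le_maxI (by simp [hy])
        omega
      · simp [inv_mul_cancel_left]
    · obtain ⟨L', hb, hlen, hc⟩ := ih j
      have hxi : (xg j)⁻¹ * xg i = xg (i+1) * (xg j)⁻¹ := conj_inv2 (relA hgt)
      refine ⟨(i+1) :: L', ?_, by simp; omega, ?_⟩
      · intro y hy
        rcases List.mem_cons.mp hy with h | h
        · subst h
          have : i ≤ maxI (i :: t) := le_maxI (by simp)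
          omega
        · have := hb y h
          have hmax : maxI t ≤ maxI (i :: t) := by simp [maxI]
          omega
      · rcases hc with ⟨j', he, hj'⟩ | he
        · refine Or.inl ⟨j', ?_, by simp; omega⟩
          calc (xg j)⁻¹ * evalX (i :: t) = ((xg j)⁻¹ * xg i) * evalX t := by
                simp [mul_assoc]
          _ = xg (i+1) * ((xg j)⁻¹ * evalX t) := by rw [hxi, mul_assoc]
          _ = xg (i+1) * (evalX L' * (xg j')⁻¹) := by rw [he]
          _ = evalX ((i+1) :: L') * (xg j')⁻¹ := by simp [mul_assoc]
        · refine Or.inr ?_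
          calc (xg j)⁻¹ * evalX (i :: t) = ((xg j)⁻¹ * xg i) * evalX t := by
                simp [mul_assoc]
          _ = xg (i+1) * ((xg j)⁻¹ * evalX t) := by rw [hxi, mul_assoc]
          _ = xg (i+1) * evalX L' := by rw [he]
          _ = evalX ((i+1) :: L') := by simp

lemma neg_pos : ∀ (R L : List ℕ),
    ∃ P Q, (evalX R)⁻¹ * evalX L = evalX P * (evalX Q)⁻¹ ∧
      (∀ p ∈ P, p ≤ maxI L + R.length) ∧ (∀ q ∈ Q, q ≤ maxI R + L.length) ∧
      P.length ≤ L.length := by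
  intro R
  induction R using List.reverseRecOn with
  | nil =>
    intro L
    exact ⟨L, [], by simp, fun p hp => by have := le_maxI hp; omega, by simp, le_rfl⟩
  | append_singleton R₀ r ih =>
    intro L
    obtain ⟨P₀, Q₀, he₀, hP₀, hQ₀, hlen₀⟩ := ih L
    obtain ⟨P₁, hb₁, hlen₁, hc₁⟩ := neg_one P₀ r
    have hrR : r ≤ maxI (R₀ ++ [r]) := le_maxI (by simp)
    have hmaxR : maxI R₀ ≤ maxI (R₀ ++ [r]) := maxI_le (fun p hp => le_maxI (by simp [hp]))
    have hP₀max : maxI P₀ ≤ maxI L + R₀.length := maxI_le hP₀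
    have hstart : (evalX (R₀ ++ [r]))⁻¹ * evalX L
        = (xg r)⁻¹ * ((evalX R₀)⁻¹ * evalX L) := by
      simp [mul_assoc]
    rcases hc₁ with ⟨r', he₁, hr'⟩ | he₁
    · refine ⟨P₁, Q₀ ++ [r'], ?_, ?_, ?_, by omega⟩
      · calc (evalX (R₀ ++ [r]))⁻¹ * evalX L
            = (xg r)⁻¹ * (evalX P₀ * (evalX Q₀)⁻¹) := by rw [hstart, he₀]
        _ = ((xg r)⁻¹ * evalX P₀) * (evalX Q₀)⁻¹ := by rw [mul_assoc]
        _ = evalX P₁ * ((xg r')⁻¹ * (evalX Q₀)⁻¹) := by rw [he₁]; simp [mul_assoc]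
        _ = evalX P₁ * (evalX (Q₀ ++ [r']))⁻¹ := by simp [mul_assoc]
      · intro p hp
        have := hb₁ p hp
        simp only [List.length_append, List.length_singleton]
        omega
      · intro q hq
        rcases List.mem_append.mp hq with h | h
        · have := hQ₀ q h; omega
        · rcases List.mem_singleton.mp h with h
          subst h
          omega
    · refine ⟨P₁, Q₀, ?_, ?_, fun q hq => by have := hQ₀ q hq; omega, by omega⟩
      · calc (evalX (R₀ ++ [r]))⁻¹ * evalX L
            = (xg r)⁻¹ * (evalX P₀ * (evalX Q₀)⁻¹) := by rw [hstart, he₀]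
        _ = ((xg r)⁻¹ * evalX P₀) * (evalX Q₀)⁻¹ := by rw [mul_assoc]
        _ = evalX P₁ * (evalX Q₀)⁻¹ := by rw [he₁]
      · intro p hp
        have := hb₁ p hp
        simp only [List.length_append, List.length_singleton]
        omega

end GBV

namespace GBV
open BVGen

lemma insert_sorted : ∀ (t : List ℕ) (j : ℕ), t.Pairwise (· ≤ ·) →
    ∃ r, r.Pairwise (· ≤ ·) ∧
      (∀ m, m ≤ j → (∀ y ∈ t, m ≤ y) → ∀ y ∈ r, m ≤ y) ∧
      evalX r = xg j * evalX t ∧ (∀ a, NA a r = NA a (j :: t)) := by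
  intro t
  induction t with
  | nil =>
    intro j _
    refine ⟨[j], by simp, ?_, by simp, fun a => rfl⟩
    intro m hm _ y hy
    rcases List.mem_singleton.mp hy with rfl
    omega
  | cons i t₀ ih =>
    intro j hp
    have hpt : t₀.Pairwise (· ≤ ·) := (List.pairwise_cons.mp hp).2
    have hit : ∀ y ∈ t₀, i ≤ y := (List.pairwise_cons.mp hp).1
    rcases le_or_gt j i with hji | hij
    · refine ⟨j :: i :: t₀, ?_, ?_, rfl, fun a => rfl⟩
      · refine List.pairwise_cons.mpr ⟨?_, hp⟩
        intro y hy
        rcases List.mem_cons.mp hy with h | h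
        · omega
        · have := hit y h; omega
      · intro m hm hlb y hy
        rcases List.mem_cons.mp hy with h | h
        · omega
        · exact hlb y h
    · obtain ⟨r₀, hr₀p, hr₀lb, hr₀e, hr₀NA⟩ := ih (j+1) hpt
      refine ⟨i :: r₀, ?_, ?_, ?_, ?_⟩
      · exact List.pairwise_cons.mpr ⟨hr₀lb i (by omega) hit, hr₀p⟩
      · intro m hm hlb y hy
        rcases List.mem_cons.mp hy with h | h
        · subst h; exact hlb y (by simp)
        · exact hr₀lb m (by omega) (fun z hz => hlb z (by simp [hz])) y h
      · calc evalX (i :: r₀) = xg i * evalX r₀ := by simp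
        _ = xg i * (xg (j+1) * evalX t₀) := by rw [hr₀e]
        _ = (xg i * xg (j+1)) * evalX t₀ := by rw [mul_assoc]
        _ = (xg j * xg i) * evalX t₀ := by rw [← relA hij]
        _ = xg j * evalX (i :: t₀) := by simp [mul_assoc]
      · intro a
        have harith : max (max (a+1) (i+2) + 1) ((j+1)+2) = max (max (a+1) (j+2) + 1) (i+2) := by
          omega
        calc NA a (i :: r₀) = NA (max (a+1) (i+2)) r₀ := rfl
        _ = NA (max (a+1) (i+2)) ((j+1) :: t₀) := hr₀NA _
        _ = NA (max (max (a+1) (i+2) + 1) ((j+1)+2)) t₀ := rfl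
        _ = NA (max (max (a+1) (j+2) + 1) (i+2)) t₀ := by rw [harith]
        _ = NA a (j :: i :: t₀) := rfl

lemma sortX : ∀ (l : List ℕ), ∃ l', l'.Pairwise (· ≤ ·) ∧ evalX l' = evalX l ∧
    (∀ a, NA a l' = NA a l) := by
  intro l
  induction l with
  | nil => exact ⟨[], by simp, rfl, fun a => rfl⟩
  | cons j t ih =>
    obtain ⟨t', hp, he, hNA⟩ := ih
    obtain ⟨r, hrp, _, hre, hrNA⟩ := insert_sorted t' j hp
    refine ⟨r, hrp, ?_, ?_⟩
    · rw [hre, he]; simp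
    · intro a
      calc NA a r = NA a (j :: t') := hrNA a
      _ = NA (max (a+1) (j+2)) t' := rfl
      _ = NA (max (a+1) (j+2)) t := hNA _
      _ = NA a (j :: t) := rfl

end GBV

namespace GBV
open BVGen

lemma InB_invW {n : ℕ} {l : List Ltr} (h : InB n l) : InB n (invW l) := by
  intro p hp
  obtain ⟨b, hb⟩ := invW_letters hp
  exact h (p.1, b) hb

lemma InB_level {l : List Ltr} {b : Block} (hb : b.n ≤ 1 → b.w2 = b.w2) : True := trivial

/-- a block's middle word lives in `B_{max n 2}` -/
lemma block_InB (b : Block) : InB (max b.n 2) b.w2 := by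
  intro p hp
  rcases le_or_gt 2 b.n with h | h
  · rw [max_eq_left h]; exact b.h2 p hp
  · exfalso
    rcases mem_BnGen_elim (b.h2 p hp) with ⟨m, hm, _⟩ | ⟨hn2, _⟩ <;> omega

end GBV

/-- The product of two blocks is represented by a single block: the set of
elements of `BV` represented by blocks is closed under multiplication. -/
theorem bv_two_blocks_to_one (w v : GBV.Block) :
    ∃ u : GBV.Block, u.eval = w.eval * v.eval := by
  classical
  open GBV in
  set n₁ := max w.n 2 with hn₁def
  set n₂ := max v.n 2 with hn₂def
  have hn₁2 : 2 ≤ n₁ := le_max_right _ _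
  have hn₂2 : 2 ≤ n₂ := le_max_right _ _
  have hc : GBV.InB n₁ w.w2 := GBV.block_InB w
  have hdI : GBV.InB n₂ (GBV.invW v.w2) := GBV.InB_invW (GBV.block_InB v)
  -- step A : merge the middle x-words
  obtain ⟨P, Q, hePQ, hPb, hQb, _⟩ := GBV.neg_pos w.w3 v.w1
  set BP := GBV.maxI v.w1 + w.w3.length with hBPdef
  set BQ := GBV.maxI w.w3 + v.w1.length with hBQdef
  set Λ₁ := max n₁ (BP + 2) with hΛ₁def
  set Λ₂ := max n₂ (BQ + 2) with hΛ₂def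
  -- c side
  obtain ⟨E₁, c₁, he₁, hB₁, hN₁⟩ := GBV.raise_iter (Λ₁ - n₁) n₁ w.w2 hn₁2 hc
  rw [show n₁ + (Λ₁ - n₁) = Λ₁ by omega] at hB₁ hN₁
  obtain ⟨E₂, c₂, he₂, hB₂, hN₂⟩ := GBV.push_multi P Λ₁ c₁ (by omega) hB₁
    (fun x hx => by have := hPb x hx; omega)
  set Λc := Λ₁ + P.length with hΛcdef
  set M := max Λc (Λ₂ + Q.length) with hMdef
  obtain ⟨E₃, c₃, he₃, hB₃, hN₃⟩ := GBV.raise_iter (M - Λc) Λc c₂ (by omega) hB₂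
  rw [show Λc + (M - Λc) = M by omega] at hB₃ hN₃
  -- d side
  obtain ⟨F₁, d₁, hf₁, hD₁, hM₁⟩ := GBV.raise_iter (Λ₂ - n₂) n₂ (GBV.invW v.w2) hn₂2 hdI
  rw [show n₂ + (Λ₂ - n₂) = Λ₂ by omega] at hD₁ hM₁
  obtain ⟨F₂, d₂, hf₂, hD₂, hM₂⟩ := GBV.push_multi Q Λ₂ d₁ (by omega) hD₁
    (fun x hx => by have := hQb x hx; omega)
  set Λd := Λ₂ + Q.length with hΛddef
  obtain ⟨F₃, d₃, hf₃, hD₃, hM₃⟩ := GBV.raise_iter (M - Λd) Λd d₂ (by omega) hD₂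
  rw [show Λd + (M - Λd) = M by omega] at hD₃ hM₃
  -- the combined three parts
  set W1L := w.w1 ++ (E₁ ++ (E₂ ++ E₃)) with hW1Ldef
  set W3L := v.w3 ++ (F₁ ++ (F₂ ++ F₃)) with hW3Ldef
  set W2L := c₃ ++ GBV.invW d₃ with hW2Ldef
  have hV1 : GBV.evalX v.w1
      = GBV.evalX w.w3 * (GBV.evalX P * (GBV.evalX Q)⁻¹) := by
    rw [← hePQ]; group
  have hCP : GBV.evalW w.w2 * GBV.evalX P
      = GBV.evalX E₁ * (GBV.evalX E₂ * (GBV.evalX E₃ * GBV.evalW c₃)) := by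
    calc GBV.evalW w.w2 * GBV.evalX P
        = GBV.evalX E₁ * (GBV.evalW c₁ * GBV.evalX P) := by rw [he₁, mul_assoc]
    _ = GBV.evalX E₁ * (GBV.evalX E₂ * GBV.evalW c₂) := by rw [he₂]
    _ = GBV.evalX E₁ * (GBV.evalX E₂ * (GBV.evalX E₃ * GBV.evalW c₃)) := by rw [he₃]
  have hQD : (GBV.evalX Q)⁻¹ * GBV.evalW v.w2
      = GBV.evalW (GBV.invW d₃) * (GBV.evalX (F₁ ++ (F₂ ++ F₃)))⁻¹ := by
    have h5 : GBV.evalW (GBV.invW v.w2) * GBV.evalX Q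
        = GBV.evalX F₁ * (GBV.evalX F₂ * (GBV.evalX F₃ * GBV.evalW d₃)) := by
      calc GBV.evalW (GBV.invW v.w2) * GBV.evalX Q
          = GBV.evalX F₁ * (GBV.evalW d₁ * GBV.evalX Q) := by rw [hf₁, mul_assoc]
      _ = GBV.evalX F₁ * (GBV.evalX F₂ * GBV.evalW d₂) := by rw [hf₂]
      _ = GBV.evalX F₁ * (GBV.evalX F₂ * (GBV.evalX F₃ * GBV.evalW d₃)) := by rw [hf₃]
    have h6 : (GBV.evalX Q)⁻¹ * GBV.evalW v.w2
        = (GBV.evalW (GBV.invW v.w2) * GBV.evalX Q)⁻¹ := by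
      rw [GBV.evalW_invW]; group
    rw [h6, h5, GBV.evalW_invW]
    simp only [GBV.evalX_append]
    group
  have key : w.eval * v.eval
      = GBV.evalX W1L * GBV.evalW W2L * (GBV.evalX W3L)⁻¹ := by
    calc w.eval * v.eval
        = GBV.evalX w.w1 * (GBV.evalW w.w2 * GBV.evalX P) *
            ((GBV.evalX Q)⁻¹ * GBV.evalW v.w2) * (GBV.evalX v.w3)⁻¹ := by
          simp only [GBV.Block.eval]
          rw [hV1]
          group
    _ = GBV.evalX w.w1 * (GBV.evalX E₁ * (GBV.evalX E₂ * (GBV.evalX E₃ * GBV.evalW c₃))) *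
          (GBV.evalW (GBV.invW d₃) * (GBV.evalX (F₁ ++ (F₂ ++ F₃)))⁻¹) *
          (GBV.evalX v.w3)⁻¹ := by rw [hCP, hQD]
    _ = GBV.evalX W1L * GBV.evalW W2L * (GBV.evalX W3L)⁻¹ := by
          rw [hW1Ldef, hW2Ldef, hW3Ldef]
          simp only [GBV.evalX_append, GBV.evalW_append, mul_inv_rev]
          group
  -- Nval bounds
  have hNw1 : GBV.NA 0 w.w1 + 1 ≤ n₁ := by
    have := w.hbound
    have h0 : GBV.Nval w.w1 = GBV.NA 0 w.w1 := rfl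
    omega
  have hNv3 : GBV.NA 0 v.w3 + 1 ≤ n₂ := by
    have := v.hbound
    have h0 : GBV.Nval v.w3 = GBV.NA 0 v.w3 := rfl
    omega
  have hNW1L : GBV.NA 0 W1L + 1 ≤ M := by
    rw [hW1Ldef, GBV.NA_append, GBV.NA_append, GBV.NA_append]
    have h1 := hN₁ (GBV.NA 0 w.w1) (by omega)
    have h2 := hN₂ (GBV.NA (GBV.NA 0 w.w1) E₁) (by omega)
    have h3 := hN₃ (GBV.NA (GBV.NA (GBV.NA 0 w.w1) E₁) E₂) (by omega)
    omega
  have hNW3L : GBV.NA 0 W3L + 1 ≤ M := by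
    rw [hW3Ldef, GBV.NA_append, GBV.NA_append, GBV.NA_append]
    have h1 := hM₁ (GBV.NA 0 v.w3) (by omega)
    have h2 := hM₂ (GBV.NA (GBV.NA 0 v.w3) F₁) (by omega)
    have h3 := hM₃ (GBV.NA (GBV.NA (GBV.NA 0 v.w3) F₁) F₂) (by omega)
    omega
  -- sort the two x-sides
  obtain ⟨w1s, hp1, heq1, hNA1⟩ := GBV.sortX W1L
  obtain ⟨w3s, hp3, heq3, hNA3⟩ := GBV.sortX W3L
  have hB2L : ∀ p ∈ W2L, p.1 ∈ GBV.BnGen M := by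
    intro p hp
    rcases List.mem_append.mp hp with h | h
    · exact hB₃ p h
    · exact GBV.InB_invW hD₃ p h
  refine ⟨⟨w1s, W2L, w3s, M, List.isChain_iff_pairwise.mpr hp1, List.isChain_iff_pairwise.mpr hp3,
    hB2L, ?_⟩, ?_⟩
  · have e1 : GBV.Nval w1s = GBV.NA 0 W1L := hNA1 0
    have e3 : GBV.Nval w3s = GBV.NA 0 W3L := hNA3 0
    omega
  · show GBV.evalX w1s * GBV.evalW W2L * (GBV.evalX w3s)⁻¹ = w.eval * v.eval
    rw [heq1, heq3, key]
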